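/- In the heterogeneous elasticity model, suppose a ≡ a is a deterministic real constant and ε is Gaussian with mean ε̄ and variance σ² > 0. Then for every φ ∈ ℝ and every x > 0 the power mean has the closed form M_φ(x) = exp( a + ε̄·log x + (1/2)·φ·σ²·(log x)² ), and the associated power-mean elasticity is ε_φ(x) = ε̄ + φ·σ²·log x. In particular ε_0 = ε̄ (constant) and ε_1(x) = ε̄ + σ²·log x. -/

import Mathlib

open MeasureTheory Real ProbabilityTheory

/-- The power mean `M_φ(x)`: `(E[Y(x)^φ])^{1/φ}` for `φ ≠ 0` and the geometric mean
`exp (E[log Y(x)])` for `φ = 0`, where `Y(x)(ω) = exp (a ω + ε ω · log x)`. -/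
noncomputable def MpowAll {Ω : Type*} [MeasurableSpace Ω] (μ : Measure Ω)
    (a e : Ω → ℝ) (φ x : ℝ) : ℝ :=
  if φ = 0 then Real.exp (∫ ω, (a ω + e ω * Real.log x) ∂μ)
  else (∫ ω, Real.exp (a ω + e ω * Real.log x) ^ φ ∂μ) ^ (1 / φ)

/-- The power-mean elasticity `ε_φ(x) = d (log M_φ(x)) / d (log x)`. -/
noncomputable def elasAll {Ω : Type*} [MeasurableSpace Ω] (μ : Measure Ω)
    (a e : Ω → ℝ) (φ x : ℝ) : ℝ :=
  deriv (fun t : ℝ => Real.log (MpowAll μ a e φ (Real.exp t))) (Real.log x)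

lemma gauss_repr (m : ℝ) {v : NNReal} (hv : v ≠ 0) (f : ℝ → ℝ) :
    ∫ y, f y ∂(gaussianReal m v) = ∫ y, gaussianPDFReal m v y * f y := by
  rw [gaussianReal_of_var_ne_zero m hv]
  have h : gaussianPDF m v = fun x => ((gaussianPDFReal m v x).toNNReal : ENNReal) := by
    ext x; rfl
  rw [h, integral_withDensity_eq_integral_smul
    ((measurable_gaussianPDFReal m v).real_toNNReal) f]
  congr 1; ext y
  rw [NNReal.smul_def, smul_eq_mul, Real.coe_toNNReal _ (gaussianPDFReal_nonneg _ _ _)]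

lemma gauss_mgf (m : ℝ) {v : NNReal} (hv : v ≠ 0) (t : ℝ) :
    ∫ y, rexp (t * y) ∂(gaussianReal m v) = rexp (m * t + v * t ^ 2 / 2) := by
  rw [gauss_repr m hv]
  have hvpos : (0:ℝ) < v := by positivity
  have key : ∀ y : ℝ, gaussianPDFReal m v y * rexp (t * y)
      = rexp (m * t + (v:ℝ) * t ^ 2 / 2) * gaussianPDFReal (m + v * t) v y := by
    intro y
    have hexp : -(y - m) ^ 2 / (2 * (v:ℝ)) + t * y
        = (m * t + (v:ℝ) * t ^ 2 / 2) + (-(y - (m + (v:ℝ) * t)) ^ 2 / (2 * (v:ℝ))) := by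
      field_simp
      ring
    simp only [gaussianPDFReal]
    rw [mul_assoc, ← Real.exp_add, hexp, Real.exp_add]
    ring
  simp_rw [key]
  rw [integral_const_mul, integral_gaussianPDFReal_eq_one (m + v * t) hv, mul_one]

lemma gauss_int_aux (m : ℝ) {v : NNReal} (hv : v ≠ 0) :
    Integrable (fun y : ℝ => (y - m) * rexp (-(y - m) ^ 2 / (2 * v))) volume := by
  have hvpos : (0:ℝ) < v := by positivity
  have hb : (0:ℝ) < (2 * (v:ℝ))⁻¹ := by positivity
  have h1 : Integrable (fun z : ℝ => z * rexp (-z ^ 2 / (2 * (v:ℝ)))) volume := by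
    have := integrable_mul_exp_neg_mul_sq hb
    convert this using 2 with z
    congr 1
    field_simp
  exact h1.comp_sub_right m

lemma gauss_pdf_mul_id_integrable (m : ℝ) {v : NNReal} (hv : v ≠ 0) :
    Integrable (fun y : ℝ => gaussianPDFReal m v y * y) volume := by
  have hdec : (fun y : ℝ => gaussianPDFReal m v y * y)
      = fun y => (√(2 * π * v))⁻¹ * ((y - m) * rexp (-(y - m) ^ 2 / (2 * v)))
        + m * gaussianPDFReal m v y := by
    ext y; simp only [gaussianPDFReal]; ring
  rw [hdec]
  exact (((gauss_int_aux m hv).const_mul _).add ((integrable_gaussianPDFReal m v).const_mul m))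

lemma gauss_mean (m : ℝ) {v : NNReal} (hv : v ≠ 0) :
    ∫ y, y ∂(gaussianReal m v) = m := by
  rw [gauss_repr m hv]
  have hdec : ∀ y : ℝ, gaussianPDFReal m v y * y
      = (√(2 * π * v))⁻¹ * ((y - m) * rexp (-(y - m) ^ 2 / (2 * v)))
        + m * gaussianPDFReal m v y := by
    intro y; simp only [gaussianPDFReal]; ring
  simp_rw [hdec]
  rw [integral_add ((gauss_int_aux m hv).const_mul _)
    ((integrable_gaussianPDFReal m v).const_mul m),
    integral_const_mul, integral_const_mul, integral_gaussianPDFReal_eq_one m hv, mul_one]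
  have h0 : ∫ y : ℝ, (y - m) * rexp (-(y - m) ^ 2 / (2 * (v:ℝ))) = 0 := by
    rw [integral_sub_right_eq_self (fun z : ℝ => z * rexp (-z ^ 2 / (2 * (v:ℝ)))) m]
    have hneg := integral_neg_eq_self (fun z : ℝ => z * rexp (-z ^ 2 / (2 * (v:ℝ)))) volume
    simp only [neg_sq, neg_mul] at hneg
    rw [integral_neg] at hneg
    linarith
  rw [h0, mul_zero, zero_add]

theorem stmt5'
    {Ω : Type*} [MeasurableSpace Ω] (μ : Measure Ω) [IsProbabilityMeasure μ]
    (c : ℝ) (e : Ω → ℝ) (he : Measurable e)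
    (ebar : ℝ) (v : NNReal) (hv : 0 < v)
    (hlaw : Measure.map e μ = gaussianReal ebar v) :
    ∀ φ x : ℝ, 0 < x →
      (if φ = 0 then Real.exp (∫ ω, (c + e ω * Real.log x) ∂μ)
        else (∫ ω, Real.exp (c + e ω * Real.log x) ^ φ ∂μ) ^ (1 / φ))
        = Real.exp (c + ebar * Real.log x + φ * (v : ℝ) * (Real.log x) ^ 2 / 2) := by
  have hv' : v ≠ 0 := hv.ne'
  have hmgf : ∀ t : ℝ, ∫ ω, rexp (t * e ω) ∂μ = rexp (ebar * t + v * t ^ 2 / 2) := by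
    intro t
    rw [← gauss_mgf ebar hv' t, ← hlaw,
      integral_map he.aemeasurable (Continuous.aestronglyMeasurable (by continuity))]
  have hmean : ∫ ω, e ω ∂μ = ebar := by
    rw [← gauss_mean ebar hv', ← hlaw]
    exact (integral_map he.aemeasurable (Continuous.aestronglyMeasurable continuous_id)).symm
  have hInt : Integrable e μ := by
    have hid : Integrable (fun y : ℝ => y) (gaussianReal ebar v) := by
      rw [gaussianReal_of_var_ne_zero _ hv']
      have h : gaussianPDF ebar v = fun x => ((gaussianPDFReal ebar v x).toNNReal : ENNReal) := by
        ext x; rfl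
      rw [h, integrable_withDensity_iff_integrable_smul
        ((measurable_gaussianPDFReal ebar v).real_toNNReal)]
      have h2 := gauss_pdf_mul_id_integrable ebar hv'
      convert h2 using 2 with y
      · rfl
      rw [NNReal.smul_def, smul_eq_mul, Real.coe_toNNReal _ (gaussianPDFReal_nonneg _ _ _)]
    have := (integrable_map_measure aestronglyMeasurable_id he.aemeasurable).mp
      (by rwa [hlaw])
    exact this
  intro φ x hx
  by_cases hφ : φ = 0
  · subst hφ
    rw [if_pos rfl]
    rw [integral_add (integrable_const c) (hInt.mul_const _), integral_const,
      integral_mul_const, hmean]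
    simp
  · rw [if_neg hφ]
    have h1 : ∀ ω, rexp (c + e ω * Real.log x) ^ φ
        = rexp ((φ * Real.log x) * e ω) * rexp (c * φ) := by
      intro ω
      rw [Real.rpow_def_of_pos (Real.exp_pos _), Real.log_exp, ← Real.exp_add]
      ring_nf
    simp_rw [h1]
    rw [integral_mul_const, hmgf (φ * Real.log x), ← Real.exp_add,
      Real.rpow_def_of_pos (Real.exp_pos _), Real.log_exp]
    congr 1
    field_simp
    ring

/-- closed-form power-mean elasticities under Gaussianity.
If `a ≡ c` is a deterministic constant and `ε ~ N(ε̄, σ²)` with `σ² = v > 0`, then for every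
`φ ∈ ℝ` and `x > 0`,
`M_φ(x) = exp (c + ε̄ log x + (1/2) φ v (log x)²)` and `ε_φ(x) = ε̄ + φ v log x`;
in particular `ε_0(x) = ε̄` and `ε_1(x) = ε̄ + v log x`. -/
theorem stmt5
    {Ω : Type*} [MeasurableSpace Ω] (μ : Measure Ω) [IsProbabilityMeasure μ]
    (c : ℝ) (e : Ω → ℝ) (he : Measurable e)
    (ebar : ℝ) (v : NNReal) (hv : 0 < v)
    (hlaw : Measure.map e μ = gaussianReal ebar v) :
    ∀ φ x : ℝ, 0 < x →
      MpowAll μ (fun _ => c) e φ x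
        = Real.exp (c + ebar * Real.log x + φ * (v : ℝ) * (Real.log x) ^ 2 / 2)
      ∧ elasAll μ (fun _ => c) e φ x = ebar + φ * (v : ℝ) * Real.log x
      ∧ elasAll μ (fun _ => c) e 0 x = ebar
      ∧ elasAll μ (fun _ => c) e 1 x = ebar + (v : ℝ) * Real.log x := by
  have hM : ∀ φ x : ℝ, 0 < x → MpowAll μ (fun _ => c) e φ x
      = Real.exp (c + ebar * Real.log x + φ * (v : ℝ) * (Real.log x) ^ 2 / 2) := by
    intro φ x hx
    have := stmt5' μ c e he ebar v hv hlaw φ x hx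
    simpa [MpowAll] using this
  intro φ x hx
  have helas : ∀ ψ : ℝ, elasAll μ (fun _ => c) e ψ x = ebar + ψ * (v : ℝ) * Real.log x := by
    intro ψ
    have hfun : (fun t : ℝ => Real.log (MpowAll μ (fun _ => c) e ψ (Real.exp t)))
        = fun t => c + ebar * t + ψ * (v : ℝ) * t ^ 2 / 2 := by
      funext t
      rw [hM ψ (Real.exp t) (Real.exp_pos t)]
      simp [Real.log_exp]
    have hd : HasDerivAt (fun t : ℝ => c + ebar * t + ψ * (v : ℝ) * t ^ 2 / 2)
        (ebar + ψ * (v : ℝ) * Real.log x) (Real.log x) := by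
      have h1 : HasDerivAt (fun t : ℝ => c + ebar * t) ebar (Real.log x) := by
        simpa using ((hasDerivAt_id (Real.log x)).const_mul ebar).const_add c
      have h2 : HasDerivAt (fun t : ℝ => ψ * (v : ℝ) * t ^ 2 / 2)
          (ψ * (v : ℝ) * Real.log x) (Real.log x) := by
        have h3 := ((hasDerivAt_pow 2 (Real.log x)).const_mul (ψ * (v : ℝ))).div_const 2
        convert h3 using 1
        · rfl
        · rfl
        simp
        ring
      exact h1.add h2
    rw [elasAll, hfun, hd.deriv]
  exact ⟨hM φ x hx, helas φ, by simpa using helas 0, by simpa using helas 1⟩
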